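/- Let T be a bounded linear operator on a Banach space X such that the one-sided ergodic Hilbert transform H_T x := lim_{n→∞} ∑_{k=1}^n T^k x / k exists for some x ∈ X. Then x lies in the closure of the range of I - T. -/
import Mathlib


open Filter Topology

/-- If the one-sided ergodic Hilbert transform `∑_{k=1}^∞ T^k x / k` converges for some `x`,
then `x` lies in the closure of the range of `I - T`. -/
theorem mem_closure_range_of_hilbert_transform_converges {𝕜 : Type*} [RCLike 𝕜]
    {X : Type*} [NormedAddCommGroup X] [NormedSpace 𝕜 X] [CompleteSpace X]
    (T : X →L[𝕜] X) (x : X)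
    (h : ∃ y : X, Tendsto (fun n : ℕ => ∑ k ∈ Finset.Icc 1 n, (k : 𝕜)⁻¹ • (T ^ k) x)
      atTop (𝓝 y)) :
    x ∈ closure (Set.range ⇑(1 - T)) := by
  obtain ⟨y, hy⟩ := h
  set b : ℕ → X := fun n => ∑ k ∈ Finset.Icc 1 n, (k : 𝕜)⁻¹ • (T ^ k) x with hb
  -- Abel summation identity
  have key : ∀ n : ℕ, ∑ k ∈ Finset.Icc 1 n, (T ^ k) x
      = (n : 𝕜) • b n - ∑ k ∈ Finset.range n, b k := by
    intro n
    induction n with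
    | zero => simp [hb]
    | succ n ih =>
      have h1 : Finset.Icc 1 (n + 1) = insert (n + 1) (Finset.Icc 1 n) := by
        rw [← Finset.insert_Icc_right_eq_Icc_add_one (by omega)]
      have hne : ((n : 𝕜) + 1) ≠ 0 := by
        have : ((n + 1 : ℕ) : 𝕜) ≠ 0 := Nat.cast_ne_zero.mpr (by omega)
        simpa using this
      have hbsucc : b (n + 1) = ((n + 1 : ℕ) : 𝕜)⁻¹ • (T ^ (n + 1)) x + b n := by
        rw [hb]
        simp only
        rw [h1, Finset.sum_insert (by simp)]
      rw [h1, Finset.sum_insert (by simp), ih, Finset.sum_range_succ, hbsucc]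
      push_cast
      rw [smul_add, smul_smul, mul_inv_cancel₀ hne, one_smul]
      module
  -- Cesàro averages of b tend to y (in norm)
  have hbz : Tendsto (fun n => ‖b n - y‖) atTop (𝓝 0) :=
    tendsto_iff_norm_sub_tendsto_zero.mp hy
  have hc : Tendsto (fun n : ℕ => (n : ℝ)⁻¹ * ∑ k ∈ Finset.range n, ‖b k - y‖)
      atTop (𝓝 0) := hbz.cesaro
  -- Kronecker: the Cesàro averages of T^k x tend to 0
  have h2 : Tendsto (fun n : ℕ => (n : 𝕜)⁻¹ • ∑ k ∈ Finset.Icc 1 n, (T ^ k) x)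
      atTop (𝓝 0) := by
    have heq : ∀ n : ℕ, 1 ≤ n →
        (n : 𝕜)⁻¹ • ∑ k ∈ Finset.Icc 1 n, (T ^ k) x
          = (b n - y) - (n : 𝕜)⁻¹ • ∑ k ∈ Finset.range n, (b k - y) := by
      intro n hn
      have hne : (n : 𝕜) ≠ 0 := Nat.cast_ne_zero.mpr (by omega)
      rw [key n, Finset.sum_sub_distrib, Finset.sum_const, Finset.card_range,
        smul_sub, smul_sub, smul_smul, inv_mul_cancel₀ hne, one_smul,
        ← Nat.cast_smul_eq_nsmul 𝕜 n y, smul_smul, inv_mul_cancel₀ hne, one_smul]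
      abel
    have hbound : ∀ᶠ n : ℕ in atTop,
        ‖(n : 𝕜)⁻¹ • ∑ k ∈ Finset.Icc 1 n, (T ^ k) x‖
          ≤ ‖b n - y‖ + (n : ℝ)⁻¹ * ∑ k ∈ Finset.range n, ‖b k - y‖ := by
      filter_upwards [Filter.eventually_ge_atTop 1] with n hn
      rw [heq n hn]
      refine (norm_sub_le _ _).trans ?_
      gcongr
      rw [norm_smul]
      have : ‖(n : 𝕜)⁻¹‖ = (n : ℝ)⁻¹ := by
        rw [norm_inv, RCLike.norm_natCast]
      rw [this]
      gcongr
      exact norm_sum_le_of_le _ fun k _ => le_refl _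
    have hlim : Tendsto (fun n : ℕ => ‖b n - y‖ + (n : ℝ)⁻¹ * ∑ k ∈ Finset.range n, ‖b k - y‖)
        atTop (𝓝 0) := by simpa using hbz.add hc
    rw [tendsto_zero_iff_norm_tendsto_zero]
    exact squeeze_zero' (Filter.Eventually.of_forall fun n => norm_nonneg _) hbound hlim
  -- x is the limit of elements of the range of 1 - T
  have hx : Tendsto (fun n : ℕ => x - (n : 𝕜)⁻¹ • ∑ k ∈ Finset.Icc 1 n, (T ^ k) x)
      atTop (𝓝 x) := by simpa using tendsto_const_nhds.sub h2
  refine mem_closure_of_tendsto hx ?_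
  filter_upwards [Filter.eventually_ge_atTop 1] with n hn
  refine ⟨(n : 𝕜)⁻¹ • ∑ k ∈ Finset.Icc 1 n, ∑ i ∈ Finset.range k, (T ^ i) x, ?_⟩
  have hgeom : ∀ k : ℕ, (1 - T) (∑ i ∈ Finset.range k, (T ^ i) x) = x - (T ^ k) x := by
    intro k
    rw [map_sum]
    have : ∀ i, (1 - T) ((T ^ i) x) = (T ^ i) x - (T ^ (i + 1)) x := by
      intro i
      simp [ContinuousLinearMap.sub_apply, pow_succ', ContinuousLinearMap.mul_apply]
    simp only [this]
    rw [Finset.sum_range_sub' (fun i => (T ^ i) x)]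
    simp
  have hne : (n : 𝕜) ≠ 0 := Nat.cast_ne_zero.mpr (by omega)
  rw [map_smul, map_sum]
  simp only [hgeom]
  rw [Finset.sum_sub_distrib, Finset.sum_const, Nat.card_Icc]
  simp only [Nat.add_sub_cancel]
  rw [smul_sub, ← Nat.cast_smul_eq_nsmul 𝕜 n x, smul_smul, inv_mul_cancel₀ hne, one_smul]
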